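/- Let ρ > 0 and let c1, c2 be real numbers with 0 < c1 < c2 < 1. Define y : ℝ → ℝ by y(r) = 1/(1 + exp(-(c2 - c1) r)). Then ∫_{-∞}^{∞} ρ y(s)(1 - y(s)) · (1 - c1)(1 - c2) / ((1 - c1) y(s) + (1 - c2)(1 - y(s))) ds = ρ (1 - c1)(1 - c2)/(c2 - c1)² · log((1 - c1)/(1 - c2)), and the integrand is integrable over ℝ. -/

import Mathlib

open MeasureTheory Set Filter Topology

/-- Improper integral over ℝ for the logistic curve `y(s) = 1/(1 + e^{-(c2-c1)s})`:
the integrand `ρ y(1-y)(1-c1)(1-c2)/((1-c1)y + (1-c2)(1-y))` is integrable and its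
integral equals `ρ(1-c1)(1-c2)/(c2-c1)² · log((1-c1)/(1-c2))`. -/
theorem stmt_12 (ρ c1 c2 : ℝ) (hρ : 0 < ρ) (h0 : 0 < c1) (h12 : c1 < c2) (h2 : c2 < 1) :
    let y : ℝ → ℝ := fun r => 1 / (1 + Real.exp (-(c2 - c1) * r))
    Integrable (fun s : ℝ => ρ * y s * (1 - y s) *
        ((1 - c1) * (1 - c2) / ((1 - c1) * y s + (1 - c2) * (1 - y s))))
      ∧ (∫ s : ℝ, ρ * y s * (1 - y s) *
          ((1 - c1) * (1 - c2) / ((1 - c1) * y s + (1 - c2) * (1 - y s))))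
        = ρ * (1 - c1) * (1 - c2) / (c2 - c1) ^ 2 * Real.log ((1 - c1) / (1 - c2)) := by
  intro y
  set a : ℝ := c2 - c1 with ha_def
  have ha : 0 < a := sub_pos.2 h12
  have hc1 : (0:ℝ) < 1 - c1 := by linarith
  have hc2 : (0:ℝ) < 1 - c2 := by linarith
  set f : ℝ → ℝ := fun s => ρ * y s * (1 - y s) *
      ((1 - c1) * (1 - c2) / ((1 - c1) * y s + (1 - c2) * (1 - y s))) with hf_def
  set C : ℝ := ρ * (1 - c1) * (1 - c2) / a ^ 2 with hC_def
  set F : ℝ → ℝ := fun s => C * Real.log ((1 - c2) + a * y s) with hF_def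
  -- basic facts about y
  have hE : ∀ s : ℝ, 0 < 1 + Real.exp (-a * s) := fun s => by positivity
  have hy_pos : ∀ s, 0 < y s := fun s => by
    simp only [y]; positivity
  have hy_lt : ∀ s, y s < 1 := fun s => by
    simp only [y]
    rw [div_lt_one (hE s)]
    have := Real.exp_pos (-a * s); linarith
  have hD_pos : ∀ s, 0 < (1 - c1) * y s + (1 - c2) * (1 - y s) := fun s => by
    have h1 := hy_pos s; have h2 := hy_lt s
    have : 0 < 1 - y s := by linarith
    positivity
  have hDa_pos : ∀ s, 0 < (1 - c2) + a * y s := fun s => by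
    have := hy_pos s; positivity
  -- derivative of y
  have hy_deriv : ∀ s : ℝ, HasDerivAt y (a * y s * (1 - y s)) s := by
    intro s
    have h1 : HasDerivAt (fun r : ℝ => -a * r) (-a) s := by
      simpa using (hasDerivAt_id s).const_mul (-a)
    have h2 : HasDerivAt (fun r : ℝ => 1 + Real.exp (-a * r))
        (Real.exp (-a * s) * (-a)) s := ((h1.exp).const_add 1)
    have h3 : HasDerivAt (fun r : ℝ => (1 + Real.exp (-a * r))⁻¹)
        (-(Real.exp (-a * s) * -a) / (1 + Real.exp (-a * s)) ^ 2) s := h2.inv (ne_of_gt (hE s))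
    have hyfun : (fun r : ℝ => (1 + Real.exp (-a * r))⁻¹) = y := by
      funext r; rw [ha_def]; simp [y, one_div]
    rw [hyfun] at h3
    convert h3 using 1
    have hys : y s = 1 / (1 + Real.exp (-a * s)) := rfl
    have h1ys : 1 - y s = Real.exp (-a * s) / (1 + Real.exp (-a * s)) := by
      rw [hys]; field_simp; ring
    rw [hys, h1ys]
    have hne := ne_of_gt (hE s)
    field_simp
  -- derivative of F is f
  have hF_deriv : ∀ s : ℝ, HasDerivAt F (f s) s := by
    intro s
    have h1 : HasDerivAt (fun r : ℝ => (1 - c2) + a * y r)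
        (a * (a * y s * (1 - y s))) s := ((hy_deriv s).const_mul a).const_add (1 - c2)
    have h2 := (h1.log (ne_of_gt (hDa_pos s))).const_mul C
    refine h2.congr_deriv ?_; symm
    have hD_eq : (1 - c1) * y s + (1 - c2) * (1 - y s) = (1 - c2) + a * y s := by
      simp only [ha_def]; ring
    simp only [hf_def, hC_def, hD_eq]
    have hne1 : (1 - c2) + a * y s ≠ 0 := ne_of_gt (hDa_pos s)
    have hne2 : a ≠ 0 := ne_of_gt ha
    field_simp
  -- nonnegativity of f
  have hf_nonneg : ∀ s, 0 ≤ f s := by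
    intro s
    have h1 := hy_pos s; have h2 := hy_lt s; have h3 := hD_pos s
    have : 0 < 1 - y s := by linarith
    simp only [hf_def]
    positivity
  -- limits of y
  have hy_top : Tendsto y atTop (𝓝 1) := by
    have h1 : Tendsto (fun s : ℝ => -a * s) atTop atBot :=
      tendsto_id.const_mul_atTop_of_neg (neg_lt_zero.2 ha)
    have h2 : Tendsto (fun s : ℝ => Real.exp (-a * s)) atTop (𝓝 0) :=
      Real.tendsto_exp_atBot.comp h1
    have h3 : Tendsto (fun s : ℝ => 1 + Real.exp (-a * s)) atTop (𝓝 1) := by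
      simpa using h2.const_add 1
    have h4 := h3.inv₀ (by norm_num)
    have hyfun : (fun r : ℝ => (1 + Real.exp (-a * r))⁻¹) = y := by
      funext r; rw [ha_def]; simp [y, one_div]
    rw [← hyfun]
    simpa using h4
  have hy_bot : Tendsto y atBot (𝓝 0) := by
    have h1 : Tendsto (fun s : ℝ => -a * s) atBot atTop :=
      tendsto_id.const_mul_atBot_of_neg (neg_lt_zero.2 ha)
    have h2 : Tendsto (fun s : ℝ => Real.exp (-a * s)) atBot atTop :=
      Real.tendsto_exp_atTop.comp h1
    have h3 : Tendsto (fun s : ℝ => 1 + Real.exp (-a * s)) atBot atTop :=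
      tendsto_atTop_add_const_left _ 1 h2
    have h4 : Tendsto (fun s : ℝ => (1 + Real.exp (-a * s))⁻¹) atBot (𝓝 0) := h3.inv_tendsto_atTop
    have hyfun : (fun r : ℝ => (1 + Real.exp (-a * r))⁻¹) = y := by
      funext r; rw [ha_def]; simp [y, one_div]
    rw [← hyfun]
    simpa using h4
  -- limits of F
  have hF_top : Tendsto F atTop (𝓝 (C * Real.log (1 - c1))) := by
    have h1 : Tendsto (fun s : ℝ => (1 - c2) + a * y s) atTop (𝓝 ((1 - c2) + a * 1)) :=
      ((hy_top.const_mul a).const_add (1 - c2))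
    have h2 : (1 - c2) + a * 1 = 1 - c1 := by rw [ha_def]; ring
    rw [h2] at h1
    exact ((Real.continuousAt_log (ne_of_gt hc1)).tendsto.comp h1).const_mul C
  have hF_bot : Tendsto F atBot (𝓝 (C * Real.log (1 - c2))) := by
    have h1 : Tendsto (fun s : ℝ => (1 - c2) + a * y s) atBot (𝓝 ((1 - c2) + a * 0)) :=
      ((hy_bot.const_mul a).const_add (1 - c2))
    have h2 : (1 - c2) + a * 0 = 1 - c2 := by ring
    rw [h2] at h1
    exact ((Real.continuousAt_log (ne_of_gt hc2)).tendsto.comp h1).const_mul C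
  -- continuity of f
  have hf_cont : Continuous f := by
    have hy_cont : Continuous y := by
      apply Continuous.div continuous_const
      · exact continuous_const.add (Real.continuous_exp.comp (continuous_const.mul continuous_id))
      · exact fun s => ne_of_gt (hE s)
    apply Continuous.mul
    · exact (continuous_const.mul hy_cont).mul (continuous_const.sub hy_cont)
    · apply Continuous.div continuous_const
      · exact (continuous_const.mul hy_cont).add
          (continuous_const.mul (continuous_const.sub hy_cont))
      · exact fun s => ne_of_gt (hD_pos s)
  -- integrability on Ioi 0
  have hIoi : IntegrableOn f (Ioi 0) := by
    exact integrableOn_Ioi_deriv_of_nonneg' (fun x _ => hF_deriv x)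
      (fun x _ => hf_nonneg x) hF_top
  -- integrability on Iic 0
  have hF_lb : ∀ s, C * Real.log (1 - c2) ≤ F s := by
    intro s
    have hC_pos : 0 < C := by simp only [hC_def]; positivity
    have : (1 - c2) ≤ (1 - c2) + a * y s := by
      have := hy_pos s; nlinarith
    exact mul_le_mul_of_nonneg_left (Real.log_le_log hc2 this) hC_pos.le
  have hIic : IntegrableOn f (Iic 0) := by
    apply integrableOn_Iic_of_intervalIntegral_norm_bounded
      (F 0 - C * Real.log (1 - c2)) 0
      (fun i : ℝ => (hf_cont.integrableOn_Ioc))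
      (tendsto_id (α := ℝ))
    filter_upwards [eventually_le_atBot (0:ℝ)] with i hi
    have hint : ∀ x, x ∈ Set.uIcc i 0 → HasDerivAt F (f x) x := fun x _ => hF_deriv x
    have h1 : ∫ x in i..0, f x = F 0 - F i :=
      intervalIntegral.integral_eq_sub_of_hasDerivAt hint
        (hf_cont.intervalIntegrable i 0)
    have h2 : (∫ x in i..0, ‖f x‖) = ∫ x in i..0, f x := by
      congr 1; funext x; exact Real.norm_of_nonneg (hf_nonneg x)
    simp only [id_eq]
    rw [h2, h1]
    have := hF_lb i
    linarith
  constructor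
  · rw [← integrableOn_univ, ← Set.Iic_union_Ioi (a := (0:ℝ))]
    exact hIic.union hIoi
  · have hIoi_val : ∫ x in Ioi (0:ℝ), f x = C * Real.log (1 - c1) - F 0 :=
      integral_Ioi_of_hasDerivAt_of_tendsto' (fun x _ => hF_deriv x) hIoi hF_top
    have hIic_val : ∫ x in Iic (0:ℝ), f x = F 0 - C * Real.log (1 - c2) :=
      integral_Iic_of_hasDerivAt_of_tendsto' (fun x _ => hF_deriv x) hIic hF_bot
    have hsplit := intervalIntegral.integral_Iic_add_Ioi (μ := volume) (b := (0:ℝ)) hIic hIoi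
    rw [← hsplit, hIic_val, hIoi_val]
    rw [Real.log_div (ne_of_gt hc1) (ne_of_gt hc2)]
    simp only [hC_def]
    ring
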